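/- Let V be a commutative ring and I an idempotent ideal with Ĩ = I ⊗_V I flat. For any commutative V-algebra A, define A_{!!} := V ⊕_{Ĩ} (Ĩ ⊗_V A), i.e., the pushout of V ← Ĩ → Ĩ ⊗_V A along the inclusion Ĩ → V and the map induced by the unit of A. Then A_{!!} carries a commutative V-algebra structure such that the canonical map A_{!!} → A is a V-algebra homomorphism. -/

import Mathlib

open TensorProduct

noncomputable section

set_option maxSynthPendingDepth 5

variable {V : Type} [CommRing V]

/-- The multiplication map `Ĩ = I ⊗[V] I → V` induced by the inclusion. -/
def idealMul (I : Ideal V) : (↥I ⊗[V] ↥I) →ₗ[V] V :=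
  TensorProduct.lift (((LinearMap.mul V V).comp I.subtype).compl₂ I.subtype)

variable (I : Ideal V) (A : Type) [CommRing A] [Algebra V A]

/-- The map `Ĩ → Ĩ ⊗ A`, `x ↦ x ⊗ 1`, induced by the unit of `A`. -/
def unitTensor : (↥I ⊗[V] ↥I) →ₗ[V] ((↥I ⊗[V] ↥I) ⊗[V] A) :=
  (TensorProduct.mk V (↥I ⊗[V] ↥I) A).flip 1

/-- The structure map of the pushout `V ⊕_Ĩ (Ĩ ⊗ A)`. -/
def bangRel : (↥I ⊗[V] ↥I) →ₗ[V] (V × ((↥I ⊗[V] ↥I) ⊗[V] A)) :=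
  (idealMul I).prod (-(unitTensor I A))

/-- `A_{!!} = V ⊕_Ĩ (Ĩ ⊗ A)`, the pushout of `V ← Ĩ → Ĩ ⊗ A` in `V`-modules. -/
def Bang : Type :=
  (V × ((↥I ⊗[V] ↥I) ⊗[V] A)) ⧸ LinearMap.range (bangRel I A)

instance : AddCommGroup (Bang I A) := by unfold Bang; infer_instance
instance : Module V (Bang I A) := by unfold Bang; infer_instance

/-- The action map `Ĩ ⊗ A → A`. -/
def tildeAct : ((↥I ⊗[V] ↥I) ⊗[V] A) →ₗ[V] A :=
  TensorProduct.lift ((LinearMap.lsmul V A).comp (idealMul I))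

/-- The canonical map `A_{!!} → A`. -/
def bangToA : Bang I A →ₗ[V] A :=
  Submodule.liftQ _ ((Algebra.linearMap V A).coprod (tildeAct I A)) (by
    rintro y ⟨x, rfl⟩
    simp only [LinearMap.mem_ker, bangRel, unitTensor, LinearMap.prod_apply,
      LinearMap.coprod_apply, Function.prod, LinearMap.neg_apply, map_neg,
      LinearMap.flip_apply, TensorProduct.mk_apply, tildeAct,
      TensorProduct.lift.tmul, LinearMap.coe_comp, Function.comp_apply,
      LinearMap.lsmul_apply, Algebra.linearMap_apply,
      Algebra.algebraMap_eq_smul_one, smul_eq_mul, mul_one]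
    ring)


set_option synthInstance.maxHeartbeats 1000000
set_option maxHeartbeats 1000000

section Aux

lemma smul_coe_comm (i i' : ↥I) : (i : V) • i' = (i' : V) • i :=
  Subtype.ext (mul_comm _ _)

lemma canon (i j i' j' : ↥I) :
    ((j : V) * (i' : V)) • (i ⊗ₜ[V] j') = ((i' : V) • i) ⊗ₜ[V] ((j : V) • j') := by
  rw [mul_smul]
  rw [smul_tmul' (i' : V) i j']
  rw [smul_tmul' (j : V) ((i' : V) • i) j']
  rw [smul_tmul]

lemma key1 (i j i' j' : ↥I) :
    ((j : V) * (i' : V)) • (i ⊗ₜ[V] j') = ((j' : V) * (i : V)) • (i' ⊗ₜ[V] j) := by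
  rw [canon, canon I i' j' i j]
  congr 1 <;> exact Subtype.ext (mul_comm _ _)

lemma key2 (i j i' j' : ↥I) :
    ((j : V) * (i' : V)) • (i ⊗ₜ[V] j') = ((i : V) * (j : V)) • (i' ⊗ₜ[V] j') := by
  rw [canon, canon I i' i j j']
  rw [smul_tmul ((i' : V)) i ((j : V) • j'), smul_tmul ((j : V)) i' ((i : V) • j')]
  rw [smul_smul, smul_smul, ← smul_tmul, ← smul_tmul]
  congr 1
  exact Subtype.ext (by simp [smul_eq_mul]; ring)

/-- For fixed `i j`, the map `i' ⊗ j' ↦ (j i') • (i ⊗ j')`. -/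
def mmulAux (i j : ↥I) : (↥I ⊗[V] ↥I) →ₗ[V] (↥I ⊗[V] ↥I) :=
  TensorProduct.lift (LinearMap.mk₂ V (fun i' j' => ((j : V) * (i' : V)) • (i ⊗ₜ[V] j'))
    (fun i₁ i₂ j' => by rw [show ((i₁ + i₂ : ↥I) : V) = (i₁ : V) + (i₂ : V) from rfl, mul_add, add_smul])
    (fun c i' j' => by
      simp only [Submodule.coe_smul, smul_eq_mul, smul_smul]
      congr 1; ring)
    (fun i' j₁ j₂ => by rw [tmul_add, smul_add])
    (fun c i' j' => by rw [tmul_smul, smul_comm]))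

@[simp] lemma mmulAux_tmul (i j i' j' : ↥I) :
    mmulAux I i j (i' ⊗ₜ[V] j') = ((j : V) * (i' : V)) • (i ⊗ₜ[V] j') := rfl

/-- The multiplication `Ĩ ⊗ Ĩ → Ĩ` (curried). -/
def mmul : (↥I ⊗[V] ↥I) →ₗ[V] (↥I ⊗[V] ↥I) →ₗ[V] (↥I ⊗[V] ↥I) :=
  TensorProduct.lift (LinearMap.mk₂ V (mmulAux I)
    (fun i₁ i₂ j => by
      apply TensorProduct.ext'; intro i' j'
      simp [add_tmul, smul_add])
    (fun c i j => by
      apply TensorProduct.ext'; intro i' j'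
      simp [smul_tmul', smul_smul, mul_comm, mul_left_comm, mul_assoc])
    (fun i j₁ j₂ => by
      apply TensorProduct.ext'; intro i' j'
      push_cast
      simp [add_mul, add_smul])
    (fun c i j => by
      apply TensorProduct.ext'; intro i' j'
      simp [smul_smul, mul_assoc]))

@[simp] lemma mmul_tmul (i j i' j' : ↥I) :
    mmul I (i ⊗ₜ[V] j) (i' ⊗ₜ[V] j') = ((j : V) * (i' : V)) • (i ⊗ₜ[V] j') := rfl

lemma mmul_comm (x y : ↥I ⊗[V] ↥I) : mmul I x y = mmul I y x := by
  induction x using TensorProduct.induction_on with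
  | zero => simp
  | add a b ha hb => simp [ha, hb]
  | tmul i j =>
    induction y using TensorProduct.induction_on with
    | zero => simp
    | add a b ha hb => simp [ha, hb]
    | tmul i' j' => simpa using key1 I i j i' j'

lemma mmul_idealMul (x y : ↥I ⊗[V] ↥I) : mmul I x y = idealMul I x • y := by
  induction x using TensorProduct.induction_on with
  | zero => simp
  | add a b ha hb => simp [ha, hb, add_smul]
  | tmul i j =>
    induction y using TensorProduct.induction_on with
    | zero => simp
    | add a b ha hb => simp [ha, hb, smul_add]
    | tmul i' j' =>
      have : idealMul I (i ⊗ₜ[V] j) = (i : V) * (j : V) := rfl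
      rw [this, mmul_tmul, key2]

lemma mmul_assoc (x y z : ↥I ⊗[V] ↥I) :
    mmul I (mmul I x y) z = mmul I x (mmul I y z) := by
  simp only [mmul_idealMul, map_smul, LinearMap.smul_apply, smul_smul]
  ring_nf

lemma idealMul_mmul (x y : ↥I ⊗[V] ↥I) :
    idealMul I (mmul I x y) = idealMul I x * idealMul I y := by
  rw [mmul_idealMul, map_smul, smul_eq_mul]

/-- Multiplication on `Ĩ ⊗ A`. -/
def mA : ((↥I ⊗[V] ↥I) ⊗[V] A) →ₗ[V] ((↥I ⊗[V] ↥I) ⊗[V] A) →ₗ[V] ((↥I ⊗[V] ↥I) ⊗[V] A) :=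
  TensorProduct.curry ((TensorProduct.map (TensorProduct.lift (mmul I)) (LinearMap.mul' V A)) ∘ₗ
    (TensorProduct.tensorTensorTensorComm V (↥I ⊗[V] ↥I) A (↥I ⊗[V] ↥I) A).toLinearMap)

@[simp] lemma mA_tmul (t s : ↥I ⊗[V] ↥I) (a b : A) :
    mA I A (t ⊗ₜ[V] a) (s ⊗ₜ[V] b) = mmul I t s ⊗ₜ[V] (a * b) := by
  simp [mA]

lemma mA_comm (x y : (↥I ⊗[V] ↥I) ⊗[V] A) : mA I A x y = mA I A y x := by
  induction x using TensorProduct.induction_on with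
  | zero => simp
  | add a b ha hb => simp [ha, hb]
  | tmul t a =>
    induction y using TensorProduct.induction_on with
    | zero => simp
    | add a b ha hb => simp [ha, hb]
    | tmul s b => rw [mA_tmul, mA_tmul, mmul_comm, mul_comm]

lemma mA_assoc (x y z : (↥I ⊗[V] ↥I) ⊗[V] A) :
    mA I A (mA I A x y) z = mA I A x (mA I A y z) := by
  induction x using TensorProduct.induction_on with
  | zero => simp
  | add a b ha hb => simp [ha, hb]
  | tmul t a =>
    induction y using TensorProduct.induction_on with
    | zero => simp
    | add a b ha hb => simp [ha, hb]
    | tmul s b =>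
      induction z using TensorProduct.induction_on with
      | zero => simp
      | add a b ha hb => simp only [map_add, ha, hb]
      | tmul r c => rw [mA_tmul, mA_tmul, mA_tmul, mA_tmul, mmul_assoc, mul_assoc]

lemma mA_unitTensor (x : (↥I ⊗[V] ↥I) ⊗[V] A) (z : ↥I ⊗[V] ↥I) :
    mA I A x (unitTensor I A z) = idealMul I z • x := by
  have hz : unitTensor I A z = z ⊗ₜ[V] (1 : A) := rfl
  rw [hz]
  induction x using TensorProduct.induction_on with
  | zero => simp
  | add a b ha hb => simp [ha, hb, smul_add]
  | tmul t a =>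
    rw [mA_tmul, mul_one, mmul_comm, mmul_idealMul, smul_tmul']

@[simp] lemma tildeAct_tmul (t : ↥I ⊗[V] ↥I) (a : A) :
    tildeAct I A (t ⊗ₜ[V] a) = idealMul I t • a := rfl

lemma tildeAct_mA (x y : (↥I ⊗[V] ↥I) ⊗[V] A) :
    tildeAct I A (mA I A x y) = tildeAct I A x * tildeAct I A y := by
  induction x using TensorProduct.induction_on with
  | zero => simp
  | add a b ha hb => simp [ha, hb, add_mul]
  | tmul t a =>
    induction y using TensorProduct.induction_on with
    | zero => simp
    | add a b ha hb => simp [ha, hb, mul_add]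
    | tmul s b =>
      rw [mA_tmul, tildeAct_tmul, tildeAct_tmul, tildeAct_tmul, idealMul_mmul]
      simp only [Algebra.smul_def, map_mul]
      ring

/-- Product of first coordinates. -/
def BmulA : (V × ((↥I ⊗[V] ↥I) ⊗[V] A)) →ₗ[V] (V × ((↥I ⊗[V] ↥I) ⊗[V] A)) →ₗ[V]
    (V × ((↥I ⊗[V] ↥I) ⊗[V] A)) :=
  ((((LinearMap.mul V V).comp (LinearMap.fst V V _)).compl₂ (LinearMap.fst V V _)).compr₂
    (LinearMap.inl V V _))

/-- `p.1 • q.2`. -/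
def BmulB : (V × ((↥I ⊗[V] ↥I) ⊗[V] A)) →ₗ[V] (V × ((↥I ⊗[V] ↥I) ⊗[V] A)) →ₗ[V]
    (V × ((↥I ⊗[V] ↥I) ⊗[V] A)) :=
  ((((LinearMap.lsmul V ((↥I ⊗[V] ↥I) ⊗[V] A)).comp (LinearMap.fst V V _)).compl₂
    (LinearMap.snd V V _)).compr₂ (LinearMap.inr V V _))

/-- `mA p.2 q.2`. -/
def BmulD : (V × ((↥I ⊗[V] ↥I) ⊗[V] A)) →ₗ[V] (V × ((↥I ⊗[V] ↥I) ⊗[V] A)) →ₗ[V]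
    (V × ((↥I ⊗[V] ↥I) ⊗[V] A)) :=
  ((((mA I A).comp (LinearMap.snd V V _)).compl₂ (LinearMap.snd V V _)).compr₂
    (LinearMap.inr V V _))

/-- Multiplication on `V × (Ĩ ⊗ A)` as a bilinear map. -/
def Bmul : (V × ((↥I ⊗[V] ↥I) ⊗[V] A)) →ₗ[V] (V × ((↥I ⊗[V] ↥I) ⊗[V] A)) →ₗ[V]
    (V × ((↥I ⊗[V] ↥I) ⊗[V] A)) :=
  BmulA I A + BmulB I A + (BmulB I A).flip + BmulD I A

lemma Bmul_apply (p q : V × ((↥I ⊗[V] ↥I) ⊗[V] A)) :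
    Bmul I A p q = (p.1 * q.1, p.1 • q.2 + q.1 • p.2 + mA I A p.2 q.2) := by
  simp only [Bmul, BmulA, BmulB, BmulD, LinearMap.add_apply, LinearMap.compr₂_apply,
    LinearMap.compl₂_apply, LinearMap.comp_apply, LinearMap.flip_apply, LinearMap.fst_apply,
    LinearMap.snd_apply, LinearMap.mul_apply', LinearMap.lsmul_apply, LinearMap.inl_apply,
    LinearMap.inr_apply, Prod.mk_add_mk, add_zero, zero_add]

lemma Bmul_comm' (p q : V × ((↥I ⊗[V] ↥I) ⊗[V] A)) : Bmul I A p q = Bmul I A q p := by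
  rw [Bmul_apply, Bmul_apply, mA_comm, mul_comm]
  refine congrArg _ ?_
  abel

lemma Bmul_assoc' (p q r : V × ((↥I ⊗[V] ↥I) ⊗[V] A)) :
    Bmul I A (Bmul I A p q) r = Bmul I A p (Bmul I A q r) := by
  simp only [Bmul_apply, map_add, map_smul, LinearMap.add_apply, LinearMap.smul_apply,
    mA_assoc, smul_add, smul_smul]
  refine Prod.ext ?_ ?_
  · exact mul_assoc _ _ _
  · dsimp only
    rw [mul_comm r.1 p.1, mul_comm r.1 q.1]
    abel

lemma Bmul_rel (p : V × ((↥I ⊗[V] ↥I) ⊗[V] A)) (z : ↥I ⊗[V] ↥I) :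
    Bmul I A p (bangRel I A z) = bangRel I A (p.1 • z) := by
  have h1 : bangRel I A z = (idealMul I z, -(unitTensor I A z)) := rfl
  have h2 : bangRel I A (p.1 • z) = (idealMul I (p.1 • z), -(unitTensor I A (p.1 • z))) := rfl
  rw [Bmul_apply, h1, h2]
  refine Prod.ext ?_ ?_
  · dsimp only
    rw [map_smul, smul_eq_mul]
  · dsimp only
    rw [map_neg, mA_unitTensor, map_smul, smul_neg]
    abel

lemma Bmul_mem_range (p : V × ((↥I ⊗[V] ↥I) ⊗[V] A)) {y : V × ((↥I ⊗[V] ↥I) ⊗[V] A)}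
    (hy : y ∈ LinearMap.range (bangRel I A)) :
    Bmul I A p y ∈ LinearMap.range (bangRel I A) := by
  obtain ⟨z, rfl⟩ := hy
  exact ⟨p.1 • z, (Bmul_rel I A p z).symm⟩

/-- The multiplication on the quotient, second variable still on `V × (Ĩ ⊗ A)`. -/
def mulHalf : Bang I A →ₗ[V] (V × ((↥I ⊗[V] ↥I) ⊗[V] A)) →ₗ[V] Bang I A :=
  Submodule.liftQ _ ((Bmul I A).compr₂ (LinearMap.range (bangRel I A)).mkQ) (by
    rintro y ⟨z, rfl⟩
    simp only [LinearMap.mem_ker]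
    apply LinearMap.ext
    intro q
    show Submodule.Quotient.mk (p := LinearMap.range (bangRel I A)) (Bmul I A (bangRel I A z) q) = 0
    rw [Submodule.Quotient.mk_eq_zero, Bmul_comm']
    exact Bmul_mem_range I A q ⟨z, rfl⟩)

/-- The multiplication on `Bang I A`. -/
def bangMul : Bang I A →ₗ[V] Bang I A →ₗ[V] Bang I A :=
  Submodule.liftQ _ (mulHalf I A).flip (by
    rintro y ⟨z, rfl⟩
    simp only [LinearMap.mem_ker]
    apply Submodule.linearMap_qext
    apply LinearMap.ext
    intro p
    show Submodule.Quotient.mk (p := LinearMap.range (bangRel I A)) (Bmul I A p (bangRel I A z)) = 0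
    rw [Submodule.Quotient.mk_eq_zero]
    exact Bmul_mem_range I A p ⟨z, rfl⟩)

lemma bangMul_mk (p q : V × ((↥I ⊗[V] ↥I) ⊗[V] A)) :
    bangMul I A (Submodule.Quotient.mk p) (Submodule.Quotient.mk q) =
      Submodule.Quotient.mk (Bmul I A p q) := by
  show Submodule.Quotient.mk (Bmul I A q p) = Submodule.Quotient.mk (Bmul I A p q)
  rw [Bmul_comm']

lemma bangToA_mk (p : V × ((↥I ⊗[V] ↥I) ⊗[V] A)) :
    bangToA I A (Submodule.Quotient.mk p) = algebraMap V A p.1 + tildeAct I A p.2 := rfl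

end Aux

/-- `A_{!!}` carries a commutative `V`-algebra structure such that
the canonical map `A_{!!} → A` is a `V`-algebra homomorphism. -/
theorem bang_comm_algebra (hI : I * I = I)
    (hflat : Module.Flat V (↥I ⊗[V] ↥I)) :
    ∃ (mul : Bang I A →ₗ[V] Bang I A →ₗ[V] Bang I A) (one : Bang I A),
      (∀ x y : Bang I A, mul x y = mul y x) ∧
      (∀ x y z : Bang I A, mul (mul x y) z = mul x (mul y z)) ∧
      (∀ x : Bang I A, mul one x = x) ∧
      bangToA I A one = 1 ∧
      (∀ x y : Bang I A, bangToA I A (mul x y) = bangToA I A x * bangToA I A y) := by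
  classical
  refine ⟨bangMul I A, Submodule.Quotient.mk (1, 0), ?_, ?_, ?_, ?_, ?_⟩
  · intro x y
    obtain ⟨p, rfl⟩ := Submodule.Quotient.mk_surjective _ x
    obtain ⟨q, rfl⟩ := Submodule.Quotient.mk_surjective _ y
    rw [bangMul_mk, bangMul_mk, Bmul_comm']
  · intro x y z
    obtain ⟨p, rfl⟩ := Submodule.Quotient.mk_surjective _ x
    obtain ⟨q, rfl⟩ := Submodule.Quotient.mk_surjective _ y
    obtain ⟨r, rfl⟩ := Submodule.Quotient.mk_surjective _ z
    rw [bangMul_mk, bangMul_mk, bangMul_mk, bangMul_mk, Bmul_assoc']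
  · intro x
    obtain ⟨p, rfl⟩ := Submodule.Quotient.mk_surjective _ x
    rw [bangMul_mk]
    congr 1
    rw [Bmul_apply]
    simp
  · rw [bangToA_mk]
    simp
  · intro x y
    obtain ⟨p, rfl⟩ := Submodule.Quotient.mk_surjective _ x
    obtain ⟨q, rfl⟩ := Submodule.Quotient.mk_surjective _ y
    rw [bangMul_mk, bangToA_mk, bangToA_mk, bangToA_mk, Bmul_apply]
    simp only [map_add, map_smul, tildeAct_mA, map_mul, Algebra.smul_def]
    ring


end
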